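/- (Strict monotonicity of the first opening angle of S_norm.) Fix a direction angle δ ∈ (0, π/2). Then the function ε ↦ θ1(ε) = arctan(−ε·cos δ / ((1 − ε)/sin δ + ε·sin δ)) is strictly decreasing on [0, 1]; i.e., increasing the weight ε of the weighted-sum term moves the first opening angle strictly downward from 0 (Chebychev) to δ − π/2 (weighted sum). -/

import Mathlib

open Real

/-- The first opening angle of `S_norm` as a function of `ε`, for direction angle `δ`. -/
noncomputable def theta1 (δ ε : ℝ) : ℝ :=
  Real.arctan (-(ε * Real.cos δ) / ((1 - ε) / Real.sin δ + ε * Real.sin δ))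

/-- Strict monotonicity of the first opening angle of `S_norm`: for a fixed direction angle
`δ ∈ (0, π/2)`, the map `ε ↦ θ1(ε)` is strictly decreasing on `[0, 1]`. -/
theorem snorm_theta1_strictAnti (δ : ℝ) (hδ0 : 0 < δ) (hδ1 : δ < Real.pi / 2) :
    StrictAntiOn (theta1 δ) (Set.Icc (0 : ℝ) 1) := by
  have hs : 0 < Real.sin δ := Real.sin_pos_of_pos_of_lt_pi hδ0 (by linarith [Real.pi_pos])
  have hc : 0 < Real.cos δ := Real.cos_pos_of_mem_Ioo ⟨by linarith [Real.pi_pos], hδ1⟩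
  intro a ha b hb hab
  obtain ⟨ha0, ha1⟩ := ha
  obtain ⟨hb0, hb1⟩ := hb
  have hDa : 0 < (1 - a) / Real.sin δ + a * Real.sin δ := by
    have : (1 - a) / Real.sin δ + a * Real.sin δ = (1 - a + a * Real.sin δ ^ 2) / Real.sin δ := by
      field_simp
    rw [this]
    apply div_pos _ hs
    nlinarith [Real.sin_sq_le_one δ, mul_pos hs hs]
  have hDb : 0 < (1 - b) / Real.sin δ + b * Real.sin δ := by
    have : (1 - b) / Real.sin δ + b * Real.sin δ = (1 - b + b * Real.sin δ ^ 2) / Real.sin δ := by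
      field_simp
    rw [this]
    apply div_pos _ hs
    nlinarith [Real.sin_sq_le_one δ, mul_pos hs hs]
  unfold theta1
  apply Real.arctan_strictMono
  rw [div_lt_div_iff₀ hDb hDa]
  have hs2 : Real.sin δ ^ 2 ≤ 1 := Real.sin_sq_le_one δ
  have key : b * ((1 - a) + a * Real.sin δ ^ 2) > a * ((1 - b) + b * Real.sin δ ^ 2) := by
    nlinarith [mul_pos hs hs, sq_nonneg (Real.sin δ)]
  have e1 : (1 - a) / Real.sin δ + a * Real.sin δ = ((1 - a) + a * Real.sin δ ^ 2) / Real.sin δ := by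
    field_simp
  have e2 : (1 - b) / Real.sin δ + b * Real.sin δ = ((1 - b) + b * Real.sin δ ^ 2) / Real.sin δ := by
    field_simp
  rw [e1, e2]
  rw [← mul_div_assoc, ← mul_div_assoc, div_lt_div_iff₀ hs hs]
  nlinarith [mul_pos (mul_pos hc hs) (sub_pos.mpr key)]
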